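/- arXiv:2503.02822 — 2 statements merged into one kernel-verified Lean document; each statement's English description precedes it below -/
import Mathlib

section
/- Let r ∈ ℕ with r ≥ 2, 0 < ε ≤ 1/32, and ν_r := r(r+1)/2. Then for any integer N ≥ 4 and any real θ with ε·N^{−ν_r} ≤ θ ≤ 1/2, the number of lattice points k ∈ Λ_{N,r} := {k ∈ ℤ^r : N ≤ k_j ≤ (j+2)N for all 1 ≤ j ≤ r} satisfying 2^{−ν_r}·ε < {θ · a_r(k)} < 1 − 2^{−ν_r}·ε is at least N^r/32. -/
open Finset

/-- `h_r(y) = ∏_{1 ≤ ℓ ≤ j ≤ r} (y_ℓ + ⋯ + y_j)`. -/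
noncomputable def hpoly (r : ℕ) (y : Fin r → ℝ) : ℝ :=
  ∏ p ∈ Finset.univ.filter (fun p : Fin r × Fin r => p.1 ≤ p.2),
    ∑ i ∈ Finset.Icc p.1 p.2, y i

/-- `c_r = r!(r-1)!⋯1!`. -/
def crconst (r : ℕ) : ℕ := ∏ i ∈ Finset.range r, Nat.factorial (i + 1)

/-- The Weyl dimension polynomial `a_r(k) = h_r(k)/c_r`. -/
noncomputable def apoly (r : ℕ) (y : Fin r → ℝ) : ℝ := hpoly r y / crconst r

namespace Stmt10Aux

attribute [local instance] Classical.propDecidable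

/-! ### basic defs -/

/-- `ν r = r(r+1)/2`. -/
def nu (r : ℕ) : ℕ := r * (r + 1) / 2

lemma two_mul_nu (r : ℕ) : 2 * nu r = r * (r + 1) := by
  have h : 2 ∣ r * (r + 1) := (Nat.even_mul_succ_self r).two_dvd
  exact Nat.mul_div_cancel' h

lemma nu_succ (r : ℕ) : nu (r + 1) = nu r + (r + 1) := by
  have h1 := two_mul_nu r
  have h2 := two_mul_nu (r + 1)
  have h3 : (r + 1) * (r + 1 + 1) = r * (r + 1) + 2 * (r + 1) := by ring
  omega

/-- ℕ-indexed version of `hpoly`. -/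
noncomputable def Hf (r : ℕ) (k : ℕ → ℝ) : ℝ :=
  ∏ j ∈ Finset.range r, ∏ l ∈ Finset.range (j + 1), ∑ i ∈ Finset.Icc l j, k i

/-- extension of a `Fin r`-tuple by zeros. -/
def extf {r : ℕ} (y : Fin r → ℝ) : ℕ → ℝ := fun n => if h : n < r then y ⟨n, h⟩ else 0

def toR {r : ℕ} (k : Fin r → ℤ) : Fin r → ℝ := fun i => (k i : ℝ)

lemma Hf_congr {r : ℕ} {k k' : ℕ → ℝ} (h : ∀ n < r, k n = k' n) : Hf r k = Hf r k' := by
  unfold Hf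
  refine Finset.prod_congr rfl fun j hj => Finset.prod_congr rfl fun l hl =>
    Finset.sum_congr rfl fun i hi => h i ?_
  simp only [Finset.mem_range] at hj hl
  have := (Finset.mem_Icc.mp hi).2
  omega

lemma sum_Icc_fin {r : ℕ} (y : Fin r → ℝ) (a b : Fin r) :
    ∑ i ∈ Finset.Icc a b, y i = ∑ n ∈ Finset.Icc (a : ℕ) (b : ℕ), extf y n := by
  rw [← Fin.map_valEmbedding_Icc, Finset.sum_map]
  refine Finset.sum_congr rfl fun i _ => ?_
  simp [extf, Fin.valEmbedding, i.isLt]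

lemma hpoly_eq_Hf (r : ℕ) (y : Fin r → ℝ) : hpoly r y = Hf r (extf y) := by
  unfold Hf hpoly
  rw [Finset.prod_sigma' (Finset.range r) (fun j => Finset.range (j + 1))
    (fun j l => ∑ i ∈ Finset.Icc l j, extf y i)]
  refine Finset.prod_bij (fun (p : Fin r × Fin r) _ => (⟨(p.2 : ℕ), (p.1 : ℕ)⟩ : Σ _ : ℕ, ℕ))
    ?_ ?_ ?_ ?_
  · intro p hp
    simp only [Finset.mem_filter, Finset.mem_univ, true_and] at hp
    simp only [Finset.mem_sigma, Finset.mem_range]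
    exact ⟨p.2.isLt, by omega⟩
  · intro p₁ h₁ p₂ h₂ heq
    simp only [Sigma.mk.inj_iff, heq_eq_eq] at heq
    ext
    · exact heq.2
    · exact heq.1
  · rintro ⟨j, l⟩ hb
    simp only [Finset.mem_sigma, Finset.mem_range] at hb
    refine ⟨(⟨l, by omega⟩, ⟨j, by omega⟩), ?_, rfl⟩
    simp only [Finset.mem_filter, Finset.mem_univ, true_and]
    exact Fin.mk_le_mk.mpr (by omega)
  · intro p hp
    exact sum_Icc_fin y p.1 p.2

lemma apoly_zero (y : Fin 0 → ℝ) : apoly 0 y = 1 := by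
  simp [apoly, hpoly, crconst]

lemma apoly_one (y : Fin 1 → ℝ) : apoly 1 y = y 0 := by
  rw [apoly, hpoly_eq_Hf]
  simp [Hf, crconst, extf]

/-! ### the finite-difference identity -/

lemma altsum (r : ℕ) : ∀ m : ℕ, m ≤ r →
    ∑ u ∈ Finset.range (r + 1), (-1 : ℝ) ^ u * (r.choose u) * (u : ℝ) ^ m
      = if m = r then (-1 : ℝ) ^ r * r.factorial else 0 := by
  induction r with
  | zero =>
    intro m hm
    interval_cases m
    simp
  | succ r IH =>
    intro m hm
    have step1 : ∑ u ∈ Finset.range (r + 2), (-1 : ℝ) ^ u * ((r + 1).choose u) * (u : ℝ) ^ m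
        = (∑ v ∈ Finset.range (r + 1), -((-1 : ℝ) ^ v * (r.choose v) * ((v : ℝ) + 1) ^ m))
          + (∑ v ∈ Finset.range (r + 1), (-1 : ℝ) ^ (v + 1) * (r.choose (v + 1)) * ((v : ℝ) + 1) ^ m
              + (0 : ℝ) ^ m) := by
      rw [Finset.sum_range_succ' (fun u => (-1 : ℝ) ^ u * ((r + 1).choose u) * (u : ℝ) ^ m) (r + 1)]
      have hterm : ∀ k ∈ Finset.range (r + 1),
          (-1 : ℝ) ^ (k + 1) * (((r + 1).choose (k + 1) : ℕ) : ℝ) * (((k + 1 : ℕ) : ℝ)) ^ m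
            = -((-1 : ℝ) ^ k * (r.choose k) * ((k : ℝ) + 1) ^ m)
              + (-1 : ℝ) ^ (k + 1) * (r.choose (k + 1)) * ((k : ℝ) + 1) ^ m := by
        intro k _
        rw [Nat.choose_succ_succ]
        push_cast
        ring
      rw [Finset.sum_congr rfl hterm, Finset.sum_add_distrib]
      simp only [Nat.choose_zero_right, Nat.cast_one, pow_zero]
      ring
    have step3 : (∑ v ∈ Finset.range (r + 1), (-1 : ℝ) ^ (v + 1) * (r.choose (v + 1)) * ((v : ℝ) + 1) ^ m
              + (0 : ℝ) ^ m)
        = ∑ u ∈ Finset.range (r + 1), (-1 : ℝ) ^ u * (r.choose u) * (u : ℝ) ^ m := by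
      have h1 : ∑ u ∈ Finset.range (r + 2), (-1 : ℝ) ^ u * (r.choose u) * (u : ℝ) ^ m
          = ∑ v ∈ Finset.range (r + 1), (-1 : ℝ) ^ (v + 1) * (r.choose (v + 1)) * ((v : ℝ) + 1) ^ m
              + (0 : ℝ) ^ m := by
        rw [Finset.sum_range_succ' (fun u => (-1 : ℝ) ^ u * (r.choose u) * (u : ℝ) ^ m) (r + 1)]
        congr 1
        · refine Finset.sum_congr rfl fun v _ => ?_
          push_cast
          ring
        · simp
      have h2 : ∑ u ∈ Finset.range (r + 2), (-1 : ℝ) ^ u * (r.choose u) * (u : ℝ) ^ m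
          = ∑ u ∈ Finset.range (r + 1), (-1 : ℝ) ^ u * (r.choose u) * (u : ℝ) ^ m := by
        rw [Finset.sum_range_succ]
        simp [Nat.choose_succ_self]
      rw [← h1, h2]
    have step4 : ∑ v ∈ Finset.range (r + 1), (-1 : ℝ) ^ v * (r.choose v) * ((v : ℝ) + 1) ^ m
        = ∑ j ∈ Finset.range (m + 1), (m.choose j : ℝ) *
            ∑ v ∈ Finset.range (r + 1), (-1 : ℝ) ^ v * (r.choose v) * (v : ℝ) ^ j := by
      have hexp : ∀ v : ℕ, ((v : ℝ) + 1) ^ m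
          = ∑ j ∈ Finset.range (m + 1), (v : ℝ) ^ j * (m.choose j : ℝ) := by
        intro v
        rw [add_pow]
        exact Finset.sum_congr rfl fun j _ => by ring
      calc ∑ v ∈ Finset.range (r + 1), (-1 : ℝ) ^ v * (r.choose v) * ((v : ℝ) + 1) ^ m
          = ∑ v ∈ Finset.range (r + 1), ∑ j ∈ Finset.range (m + 1),
              (m.choose j : ℝ) * ((-1 : ℝ) ^ v * (r.choose v) * (v : ℝ) ^ j) := by
            refine Finset.sum_congr rfl fun v _ => ?_
            rw [hexp v, Finset.mul_sum]
            exact Finset.sum_congr rfl fun j _ => by ring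
        _ = _ := by
            rw [Finset.sum_comm]
            exact Finset.sum_congr rfl fun j _ => by rw [Finset.mul_sum]
    have step5 : ∑ j ∈ Finset.range (m + 1), (m.choose j : ℝ) *
            ∑ v ∈ Finset.range (r + 1), (-1 : ℝ) ^ v * (r.choose v) * (v : ℝ) ^ j
        = (∑ v ∈ Finset.range (r + 1), (-1 : ℝ) ^ v * (r.choose v) * (v : ℝ) ^ m)
          + ∑ j ∈ Finset.range m, (m.choose j : ℝ) *
            ∑ v ∈ Finset.range (r + 1), (-1 : ℝ) ^ v * (r.choose v) * (v : ℝ) ^ j := by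
      rw [Finset.sum_range_succ]
      simp [add_comm]
    have step6 : ∑ j ∈ Finset.range m, (m.choose j : ℝ) *
            ∑ v ∈ Finset.range (r + 1), (-1 : ℝ) ^ v * (r.choose v) * (v : ℝ) ^ j
        = if r ∈ Finset.range m then (m.choose r : ℝ) * ((-1 : ℝ) ^ r * r.factorial) else 0 := by
      rw [← Finset.sum_ite_eq' (Finset.range m) r
        (fun j => (m.choose j : ℝ) * ((-1 : ℝ) ^ r * r.factorial))]
      refine Finset.sum_congr rfl fun j hj => ?_
      have hjr : j ≤ r := by
        simp only [Finset.mem_range] at hj; omega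
      rw [IH j hjr]
      by_cases hje : j = r
      · subst hje; simp
      · simp [hje]
    rw [step1, step3, Finset.sum_neg_distrib, step4, step5]
    by_cases hm1 : m = r + 1
    · subst hm1
      have hmem : r ∈ Finset.range (r + 1) := by simp
      rw [step6, if_pos hmem]
      have : ((r + 1).choose r : ℝ) = (r + 1 : ℝ) := by
        rw [Nat.choose_succ_self_right]; push_cast; ring
      rw [if_pos rfl, this, Nat.factorial_succ]
      push_cast
      ring
    · have hmr : m ≤ r := by omega
      have hnmem : r ∉ Finset.range m := by
        simp only [Finset.mem_range]; omega
      rw [step6, if_neg hnmem, IH m hmr, if_neg hm1]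
      by_cases hme : m = r
      · subst hme; simp
      · simp [hme]

lemma diff_prod (r : ℕ) (a : ℕ → ℝ) (b : ℝ) :
    ∑ u ∈ Finset.range (r + 1), (-1 : ℝ) ^ u * (r.choose u) *
        ∏ l ∈ Finset.range r, (a l + u * b)
      = (-1 : ℝ) ^ r * r.factorial * b ^ r := by
  have hprod : ∀ u : ℕ, ∏ l ∈ Finset.range r, (a l + u * b)
      = ∑ S ∈ (Finset.range r).powerset, (∏ l ∈ S, a l) * ((u : ℝ) * b) ^ (r - S.card) := by
    intro u
    rw [Finset.prod_add]
    refine Finset.sum_congr rfl fun S hS => ?_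
    rw [Finset.prod_const, Finset.card_sdiff_of_subset (Finset.mem_powerset.mp hS), Finset.card_range]
  calc ∑ u ∈ Finset.range (r + 1), (-1 : ℝ) ^ u * (r.choose u) *
        ∏ l ∈ Finset.range r, (a l + u * b)
      = ∑ u ∈ Finset.range (r + 1), ∑ S ∈ (Finset.range r).powerset,
          (∏ l ∈ S, a l) * b ^ (r - S.card) * ((-1 : ℝ) ^ u * (r.choose u) * (u : ℝ) ^ (r - S.card)) := by
        refine Finset.sum_congr rfl fun u _ => ?_
        rw [hprod u, Finset.mul_sum]
        refine Finset.sum_congr rfl fun S _ => ?_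
        rw [mul_pow]
        ring
    _ = ∑ S ∈ (Finset.range r).powerset, ∑ u ∈ Finset.range (r + 1),
          (∏ l ∈ S, a l) * b ^ (r - S.card) * ((-1 : ℝ) ^ u * (r.choose u) * (u : ℝ) ^ (r - S.card)) :=
        Finset.sum_comm
    _ = ∑ S ∈ (Finset.range r).powerset, (∏ l ∈ S, a l) * b ^ (r - S.card) *
          ∑ u ∈ Finset.range (r + 1), (-1 : ℝ) ^ u * (r.choose u) * (u : ℝ) ^ (r - S.card) := by
        refine Finset.sum_congr rfl fun S _ => ?_
        rw [Finset.mul_sum]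
    _ = (-1 : ℝ) ^ r * r.factorial * b ^ r := by
        have hterm : ∀ S ∈ (Finset.range r).powerset,
            (∏ l ∈ S, a l) * b ^ (r - S.card) *
              ∑ u ∈ Finset.range (r + 1), (-1 : ℝ) ^ u * (r.choose u) * (u : ℝ) ^ (r - S.card)
            = if S = (∅ : Finset ℕ) then (-1 : ℝ) ^ r * r.factorial * b ^ r else 0 := by
          intro S hS
          have hcard : S.card ≤ r := by
            have := Finset.card_le_card (Finset.mem_powerset.mp hS)
            simpa using this
          rw [altsum r (r - S.card) (Nat.sub_le r _)]
          by_cases hS0 : S = (∅ : Finset ℕ)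
          · subst hS0
            simp
            ring
          · have hpos : 1 ≤ S.card := Finset.card_pos.mpr (Finset.nonempty_iff_ne_empty.mpr hS0)
            have hne : r - S.card ≠ r := by omega
            rw [if_neg hne, if_neg hS0, mul_zero]
        rw [Finset.sum_congr rfl hterm, Finset.sum_ite_eq' (Finset.range r).powerset
          (∅ : Finset ℕ) (fun _ => (-1 : ℝ) ^ r * r.factorial * b ^ r)]
        simp

lemma Hf_succ (q : ℕ) (k : ℕ → ℝ) :
    Hf (q + 1) k = Hf q k * ∏ l ∈ Finset.range (q + 1), ∑ i ∈ Finset.Icc l q, k i :=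
  Finset.prod_range_succ _ _

lemma crconst_succ (q : ℕ) : crconst (q + 1) = crconst q * (q + 1).factorial :=
  Finset.prod_range_succ _ _

lemma crconst_pos (q : ℕ) : 0 < crconst q :=
  Finset.prod_pos fun i _ => Nat.factorial_pos (i + 1)

lemma extf_snoc_lt (q : ℕ) (kh : Fin q → ℤ) (t : ℤ) :
    ∀ n < q, extf (toR (Fin.snoc kh t)) n = extf (toR kh) n := by
  intro n hn
  simp only [extf, toR]
  rw [dif_pos (by omega : n < q + 1), dif_pos hn]
  have h : (⟨n, by omega⟩ : Fin (q + 1)) = Fin.castSucc ⟨n, hn⟩ := rfl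
  rw [h, Fin.snoc_castSucc]

lemma extf_snoc_last (q : ℕ) (kh : Fin q → ℤ) (t : ℤ) :
    extf (toR (Fin.snoc kh t)) q = (t : ℝ) := by
  simp only [extf, toR]
  rw [dif_pos (by omega : q < q + 1)]
  have h : (⟨q, by omega⟩ : Fin (q + 1)) = Fin.last q := rfl
  rw [h, Fin.snoc_last]

lemma apoly_snoc (q : ℕ) (kh : Fin q → ℤ) (t : ℤ) :
    apoly (q + 1) (toR (Fin.snoc kh t)) =
      apoly q (toR kh) / (q + 1).factorial *
        ∏ l ∈ Finset.range (q + 1),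
          ((∑ i ∈ Finset.Ico l q, extf (toR kh) i) + (t : ℝ)) := by
  have hfac : ((q + 1).factorial : ℝ) ≠ 0 := Nat.cast_ne_zero.mpr (Nat.factorial_ne_zero _)
  have hcr : ((crconst q : ℕ) : ℝ) ≠ 0 := Nat.cast_ne_zero.mpr (crconst_pos q).ne'
  rw [apoly, apoly, hpoly_eq_Hf, hpoly_eq_Hf, Hf_succ, crconst_succ]
  rw [Hf_congr (fun n hn => extf_snoc_lt q kh t n hn)]
  have hinner : ∀ l ∈ Finset.range (q + 1),
      ∑ i ∈ Finset.Icc l q, extf (toR (Fin.snoc kh t)) i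
        = (∑ i ∈ Finset.Ico l q, extf (toR kh) i) + (t : ℝ) := by
    intro l hl
    have hlq : l ≤ q := by simp only [Finset.mem_range] at hl; omega
    rw [← Finset.Ico_add_one_right_eq_Icc, Finset.sum_Ico_succ_top hlq, extf_snoc_last]
    congr 1
    exact Finset.sum_congr rfl fun i hi => extf_snoc_lt q kh t i (Finset.mem_Ico.mp hi).2
  rw [Finset.prod_congr rfl hinner]
  push_cast
  field_simp

lemma diff_apoly (q : ℕ) (kh : Fin q → ℤ) (t b : ℤ) :
    ∑ u ∈ Finset.range (q + 2), (-1 : ℝ) ^ u * ((q + 1).choose u) *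
        apoly (q + 1) (toR (Fin.snoc kh (t + u * b)))
      = (-1 : ℝ) ^ (q + 1) * apoly q (toR kh) * (b : ℝ) ^ (q + 1) := by
  have hfac : ((q + 1).factorial : ℝ) ≠ 0 := Nat.cast_ne_zero.mpr (Nat.factorial_ne_zero _)
  have hterm : ∀ u ∈ Finset.range (q + 2),
      (-1 : ℝ) ^ u * ((q + 1).choose u) * apoly (q + 1) (toR (Fin.snoc kh (t + u * b)))
        = apoly q (toR kh) / (q + 1).factorial *
            ((-1 : ℝ) ^ u * ((q + 1).choose u) *
              ∏ l ∈ Finset.range (q + 1),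
                (((∑ i ∈ Finset.Ico l q, extf (toR kh) i) + (t : ℝ)) + (u : ℝ) * (b : ℝ))) := by
    intro u _
    rw [apoly_snoc]
    have hc : (((t + u * b : ℤ)) : ℝ) = (t : ℝ) + (u : ℝ) * (b : ℝ) := by push_cast; ring
    rw [hc]
    have hP : ∏ l ∈ Finset.range (q + 1),
        ((∑ i ∈ Finset.Ico l q, extf (toR kh) i) + ((t : ℝ) + (u : ℝ) * (b : ℝ)))
        = ∏ l ∈ Finset.range (q + 1),
          (((∑ i ∈ Finset.Ico l q, extf (toR kh) i) + (t : ℝ)) + (u : ℝ) * (b : ℝ)) := by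
      exact Finset.prod_congr rfl fun l _ => by ring
    rw [hP]
    ring
  rw [Finset.sum_congr rfl hterm, ← Finset.mul_sum]
  rw [diff_prod (q + 1) (fun l => (∑ i ∈ Finset.Ico l q, extf (toR kh) i) + (t : ℝ)) (b : ℝ)]
  field_simp

/-! ### distance to nearest integer -/

/-- distance from `x` to the nearest integer. -/
noncomputable def nrm (x : ℝ) : ℝ := |x - round x|

lemma nrm_nonneg (x : ℝ) : 0 ≤ nrm x := abs_nonneg _

lemma nrm_le_half (x : ℝ) : nrm x ≤ 1 / 2 := abs_sub_round x

lemma nrm_eq_min (x : ℝ) : nrm x = min (Int.fract x) (1 - Int.fract x) :=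
  abs_sub_round_eq_min x

lemma nrm_le_abs_sub (x : ℝ) (m : ℤ) : nrm x ≤ |x - m| := round_le x m

lemma nrm_add_int (x : ℝ) (m : ℤ) : nrm (x + m) = nrm x := by
  unfold nrm; rw [round_add_intCast]; push_cast; ring_nf

lemma nrm_neg (x : ℝ) : nrm (-x) = nrm x := by
  refine le_antisymm ?_ ?_
  · calc nrm (-x) ≤ |(-x) - (-(round x) : ℤ)| := nrm_le_abs_sub _ _
      _ = nrm x := by unfold nrm; push_cast; rw [← abs_neg]; ring_nf
  · calc nrm x ≤ |x - (-(round (-x)) : ℤ)| := nrm_le_abs_sub _ _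
      _ = nrm (-x) := by unfold nrm; push_cast; rw [← abs_neg]; ring_nf

lemma nrm_neg_one_pow (n : ℕ) (x : ℝ) : nrm ((-1 : ℝ) ^ n * x) = nrm x := by
  rcases Nat.even_or_odd n with h | h
  · rw [h.neg_one_pow, one_mul]
  · rw [h.neg_one_pow, neg_one_mul, nrm_neg]

lemma nrm_eq_abs {x : ℝ} (h : |x| ≤ 1 / 2) : nrm x = |x| := by
  rw [nrm_eq_min]
  rcases le_or_gt 0 x with hx | hx
  · rw [abs_of_nonneg hx] at h ⊢
    rw [Int.fract_eq_self.mpr ⟨hx, by linarith⟩]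
    exact min_eq_left (by linarith)
  · rw [abs_of_neg hx] at h ⊢
    have hfl : ⌊x⌋ = -1 := by
      apply Int.floor_eq_iff.mpr
      constructor <;> push_cast <;> linarith
    have hfr : Int.fract x = x + 1 := by
      rw [Int.fract, hfl]; push_cast; ring
    rw [hfr]
    have h2 : 1 - (x + 1) = -x := by ring
    rw [h2]
    exact min_eq_right (by linarith)

lemma nrm_fract_iff {δ x : ℝ} :
    (δ < Int.fract x ∧ Int.fract x < 1 - δ) ↔ δ < nrm x := by
  rw [nrm_eq_min, lt_min_iff]
  constructor <;> rintro ⟨h1, h2⟩ <;> exact ⟨h1, by linarith⟩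

lemma nrm_scale (x : ℝ) (c : ℤ) (h : nrm x * |(c : ℝ)| ≤ 1 / 2) :
    nrm (x * c) = nrm x * |(c : ℝ)| := by
  have h1 : x * c = (x - round x) * c + ((round x * c : ℤ) : ℝ) := by push_cast; ring
  rw [h1, nrm_add_int, nrm_eq_abs (by rwa [abs_mul])]
  rw [abs_mul]; rfl

lemma nrm_sum_le (n : ℕ) (f : ℕ → ℝ) (c : ℕ → ℤ) :
    nrm (∑ u ∈ Finset.range n, (c u : ℝ) * f u)
      ≤ ∑ u ∈ Finset.range n, |(c u : ℝ)| * nrm (f u) := by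
  calc nrm (∑ u ∈ Finset.range n, (c u : ℝ) * f u)
      ≤ |(∑ u ∈ Finset.range n, (c u : ℝ) * f u) -
          ((∑ u ∈ Finset.range n, c u * round (f u) : ℤ) : ℝ)| := nrm_le_abs_sub _ _
    _ = |∑ u ∈ Finset.range n, (c u : ℝ) * (f u - round (f u))| := by
        push_cast
        rw [← Finset.sum_sub_distrib]
        congr 1
        exact Finset.sum_congr rfl fun u _ => by ring
    _ ≤ ∑ u ∈ Finset.range n, |(c u : ℝ) * (f u - round (f u))| :=
        Finset.abs_sum_le_sum_abs _ _
    _ = ∑ u ∈ Finset.range n, |(c u : ℝ)| * nrm (f u) := by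
        exact Finset.sum_congr rfl fun u _ => abs_mul _ _

/-! ### points, boxes, goodness -/

noncomputable def box (r N : ℕ) : Finset (Fin r → ℤ) :=
  Finset.Icc (fun _ => (N : ℤ)) (fun j => ((j : ℕ) + 3) * N)

lemma mem_box {r N : ℕ} {k : Fin r → ℤ} :
    k ∈ box r N ↔ ∀ j, (N : ℤ) ≤ k j ∧ k j ≤ ((j : ℕ) + 3) * N := by
  simp [box, Finset.mem_Icc, Pi.le_def, forall_and]

def goodPt (r : ℕ) (ε θ : ℝ) (k : Fin r → ℤ) : Prop :=
  ε / 2 ^ (nu r) < Int.fract (θ * apoly r (toR k)) ∧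
    Int.fract (θ * apoly r (toR k)) < 1 - ε / 2 ^ (nu r)

/-! ### the window lemma -/

lemma window (q N : ℕ) (ε θ : ℝ) (kh : Fin q → ℤ) (b : ℕ)
    (hlow : ε / 2 ^ (nu q) < nrm (θ * apoly q (toR kh)) * (b : ℝ) ^ (q + 1))
    (hhigh : nrm (θ * apoly q (toR kh)) * (b : ℝ) ^ (q + 1) ≤ 1 / 2)
    (t₀ : ℤ) : ∃ u < q + 2, goodPt (q + 1) ε θ (Fin.snoc kh (t₀ + u * b)) := by
  by_contra hcon
  push_neg at hcon
  set α := θ * apoly q (toR kh) with hα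
  set δ := ε / 2 ^ (nu (q + 1)) with hδ
  have hbad : ∀ u < q + 2, nrm (θ * apoly (q + 1) (toR (Fin.snoc kh (t₀ + u * b)))) ≤ δ := by
    intro u hu
    by_contra hb
    exact hcon u hu (nrm_fract_iff.mpr (lt_of_not_ge hb))
  have hkey : ∑ u ∈ Finset.range (q + 2), ((((-1 : ℤ) ^ u * ((q + 1).choose u) : ℤ) : ℝ)) *
        (θ * apoly (q + 1) (toR (Fin.snoc kh (t₀ + u * b))))
      = (-1 : ℝ) ^ (q + 1) * (α * (b : ℝ) ^ (q + 1)) := by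
    have h1 : ∑ u ∈ Finset.range (q + 2), (-1 : ℝ) ^ u * ((q + 1).choose u) *
          apoly (q + 1) (toR (Fin.snoc kh (t₀ + u * b)))
        = (-1 : ℝ) ^ (q + 1) * apoly q (toR kh) * (b : ℝ) ^ (q + 1) := diff_apoly q kh t₀ b
    calc ∑ u ∈ Finset.range (q + 2), ((((-1 : ℤ) ^ u * ((q + 1).choose u) : ℤ) : ℝ)) *
          (θ * apoly (q + 1) (toR (Fin.snoc kh (t₀ + u * b))))
        = θ * ∑ u ∈ Finset.range (q + 2), (-1 : ℝ) ^ u * ((q + 1).choose u) *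
            apoly (q + 1) (toR (Fin.snoc kh (t₀ + u * b))) := by
          rw [Finset.mul_sum]
          refine Finset.sum_congr rfl fun u _ => ?_
          push_cast
          ring
      _ = (-1 : ℝ) ^ (q + 1) * (α * (b : ℝ) ^ (q + 1)) := by rw [h1, hα]; ring
  have hnrm1 : nrm (α * (b : ℝ) ^ (q + 1)) = nrm α * (b : ℝ) ^ (q + 1) := by
    have hc : (((b : ℤ) ^ (q + 1) : ℤ) : ℝ) = (b : ℝ) ^ (q + 1) := by push_cast; ring
    have habs : |(((b : ℤ) ^ (q + 1) : ℤ) : ℝ)| = (b : ℝ) ^ (q + 1) := by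
      rw [hc, abs_of_nonneg (by positivity)]
    have := nrm_scale α ((b : ℤ) ^ (q + 1)) (by rw [habs]; exact hhigh)
    rw [hc] at this
    rw [this, abs_of_nonneg (by positivity : (0:ℝ) ≤ (b:ℝ) ^ (q + 1))]
  have hsum : nrm (∑ u ∈ Finset.range (q + 2), ((((-1 : ℤ) ^ u * ((q + 1).choose u) : ℤ) : ℝ)) *
        (θ * apoly (q + 1) (toR (Fin.snoc kh (t₀ + u * b)))))
      ≤ 2 ^ (q + 1) * δ := by
    calc nrm (∑ u ∈ Finset.range (q + 2), ((((-1 : ℤ) ^ u * ((q + 1).choose u) : ℤ) : ℝ)) *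
          (θ * apoly (q + 1) (toR (Fin.snoc kh (t₀ + u * b)))))
        ≤ ∑ u ∈ Finset.range (q + 2), |(((-1 : ℤ) ^ u * ((q + 1).choose u) : ℤ) : ℝ)| *
            nrm (θ * apoly (q + 1) (toR (Fin.snoc kh (t₀ + u * b)))) := nrm_sum_le _ _ _
      _ ≤ ∑ u ∈ Finset.range (q + 2), (((q + 1).choose u : ℕ) : ℝ) * δ := by
          refine Finset.sum_le_sum fun u hu => ?_
          have habs : |(((-1 : ℤ) ^ u * ((q + 1).choose u) : ℤ) : ℝ)| = (((q + 1).choose u : ℕ) : ℝ) := by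
            push_cast
            rw [abs_mul, abs_pow, abs_neg, abs_one, one_pow, one_mul,
              abs_of_nonneg (by positivity)]
          rw [habs]
          exact mul_le_mul_of_nonneg_left
            (hbad u (Finset.mem_range.mp hu)) (by positivity)
      _ = 2 ^ (q + 1) * δ := by
          rw [← Finset.sum_mul]
          congr 1
          rw [← Nat.cast_sum]
          norm_cast
          exact Nat.sum_range_choose (q + 1)
  rw [hkey, nrm_neg_one_pow, hnrm1] at hsum
  have hfin : (2 : ℝ) ^ (q + 1) * δ = ε / 2 ^ (nu q) := by
    rw [hδ, nu_succ, pow_add]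
    field_simp
    ring
  rw [hfin] at hsum
  linarith

/-! ### counting good points on a line -/

lemma block_count (w : ℕ) (P : ℤ → Prop) (b : ℕ) (hb : 1 ≤ b)
    (hval : ∀ t₀ : ℤ, ∃ u < w, P (t₀ + u * b)) (c : ℤ) :
    b ≤ ((Finset.Ico c (c + w * b)).filter P).card := by
  have hch : ∀ o : ℕ, ∃ u : ℕ, u < w ∧ P (c + o + u * b) := by
    intro o
    obtain ⟨u, hu, hp⟩ := hval (c + o)
    exact ⟨u, hu, hp⟩
  set g : ℕ → ℤ := fun o => c + o + (hch o).choose * b with hg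
  have hmem : ∀ o ∈ Finset.range b, g o ∈ (Finset.Ico c (c + w * b)).filter P := by
    intro o ho
    obtain ⟨hu, hp⟩ := (hch o).choose_spec
    have hob : o < b := Finset.mem_range.mp ho
    refine Finset.mem_filter.mpr ⟨Finset.mem_Ico.mpr ⟨?_, ?_⟩, hp⟩
    · have h0 : (0:ℤ) ≤ (o:ℤ) + ((hch o).choose : ℤ) * (b:ℤ) := by positivity
      simp only [hg]
      linarith
    · have h1 : (((hch o).choose : ℤ) + 1) * (b:ℤ) ≤ (w:ℤ) * (b:ℤ) := by
        have : ((hch o).choose : ℤ) + 1 ≤ (w:ℤ) := by exact_mod_cast hu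
        exact mul_le_mul_of_nonneg_right this (by positivity)
      have h2 : (o:ℤ) < (b:ℤ) := by exact_mod_cast hob
      simp only [hg]
      nlinarith
  have hinj : Set.InjOn g (Finset.range b) := by
    intro o₁ h₁ o₂ h₂ heq
    simp only [Finset.coe_range, Set.mem_Iio] at h₁ h₂
    simp only [hg] at heq
    set u₁ := (hch o₁).choose with hu₁
    set u₂ := (hch o₂).choose with hu₂
    have heq' : (o₁:ℤ) + (u₁:ℤ) * b = (o₂:ℤ) + (u₂:ℤ) * b := by linarith
    rcases lt_trichotomy u₁ u₂ with hlt | heqq | hlt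
    · exfalso
      have h3 : (1:ℤ) ≤ (u₂:ℤ) - u₁ := by
        have : (u₁:ℤ) < (u₂:ℤ) := by exact_mod_cast hlt
        omega
      have h4 : ((u₂:ℤ) - u₁) * b ≥ 1 * b :=
        mul_le_mul_of_nonneg_right h3 (by positivity)
      have h5 : (o₁:ℤ) < b := by exact_mod_cast h₁
      have h6 : (0:ℤ) ≤ (o₂:ℤ) := by positivity
      nlinarith
    · rw [heqq] at heq'
      exact_mod_cast (by linarith : (o₁:ℤ) = (o₂:ℤ))
    · exfalso
      have h3 : (1:ℤ) ≤ (u₁:ℤ) - u₂ := by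
        have : (u₂:ℤ) < (u₁:ℤ) := by exact_mod_cast hlt
        omega
      have h4 : ((u₁:ℤ) - u₂) * b ≥ 1 * b :=
        mul_le_mul_of_nonneg_right h3 (by positivity)
      have h5 : (o₂:ℤ) < b := by exact_mod_cast h₂
      have h6 : (0:ℤ) ≤ (o₁:ℤ) := by positivity
      nlinarith
  calc b = (Finset.range b).card := (Finset.card_range b).symm
    _ ≤ ((Finset.Ico c (c + w * b)).filter P).card :=
        Finset.card_le_card_of_injOn g hmem hinj

lemma line_count (w : ℕ) (P : ℤ → Prop) (b₀ : ℕ) (hb₀ : 1 ≤ b₀) :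
    ∀ M : ℕ, (b₀ ≤ M ∨ M = 0) →
    (∀ b : ℕ, b₀ ≤ b → b < 2 * b₀ → b ≤ M → ∀ t₀ : ℤ, ∃ u < w, P (t₀ + u * b)) →
    ∀ c : ℤ, (M : ℕ) ≤ ((Finset.Ico c (c + w * M)).filter P).card := by
  intro M
  induction M using Nat.strong_induction_on with
  | _ M IH =>
    intro hM hval c
    rcases hM with hbM | rfl
    · by_cases h2 : M < 2 * b₀
      · exact block_count w P M (le_trans hb₀ hbM) (hval M hbM h2 le_rfl) c
      · push_neg at h2
        have hM' : b₀ ≤ M - b₀ := by omega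
        have hle1 : c ≤ c + (w:ℤ) * b₀ := by
          have : (0:ℤ) ≤ (w:ℤ) * b₀ := by positivity
          linarith
        have hle2 : c + (w:ℤ) * b₀ ≤ c + (w:ℤ) * M := by
          have : (w:ℤ) * b₀ ≤ (w:ℤ) * M := by
            have : (b₀:ℤ) ≤ (M:ℤ) := by exact_mod_cast hbM
            exact mul_le_mul_of_nonneg_left this (by positivity)
          linarith
        have hsplit : Finset.Ico c (c + (w:ℤ) * M)
            = Finset.Ico c (c + (w:ℤ) * b₀) ∪ Finset.Ico (c + (w:ℤ) * b₀) (c + (w:ℤ) * M) :=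
          (Finset.Ico_union_Ico_eq_Ico hle1 hle2).symm
        have hd : Disjoint ((Finset.Ico c (c + (w:ℤ) * b₀)).filter P)
            ((Finset.Ico (c + (w:ℤ) * b₀) (c + (w:ℤ) * M)).filter P) :=
          Finset.disjoint_filter_filter (Finset.Ico_disjoint_Ico_consecutive c _ _)
        have hcard : ((Finset.Ico c (c + (w:ℤ) * M)).filter P).card
            = ((Finset.Ico c (c + (w:ℤ) * b₀)).filter P).card
              + ((Finset.Ico (c + (w:ℤ) * b₀) (c + (w:ℤ) * M)).filter P).card := by
          rw [hsplit, Finset.filter_union, Finset.card_union_of_disjoint hd]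
        have hbnd1 : b₀ ≤ ((Finset.Ico c (c + (w:ℤ) * b₀)).filter P).card :=
          block_count w P b₀ hb₀ (hval b₀ le_rfl (by omega) (by omega)) c
        have hbnd2 : M - b₀ ≤ ((Finset.Ico (c + (w:ℤ) * b₀) (c + (w:ℤ) * M)).filter P).card := by
          have hrw : (c + (w:ℤ) * b₀) + (w:ℤ) * ((M - b₀ : ℕ) : ℤ) = c + (w:ℤ) * M := by
            have : ((M - b₀ : ℕ) : ℤ) = (M:ℤ) - (b₀:ℤ) := by omega
            rw [this]; ring
          have := IH (M - b₀) (by omega) (Or.inl hM')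
            (fun b hb1 hb2 hb3 => hval b hb1 hb2 (by omega)) (c + (w:ℤ) * b₀)
          rwa [hrw] at this
        omega
    · simp

/-! ### numeric lemma -/

lemma num1 (q : ℕ) {ε : ℝ} (hε : 0 < ε) (hε' : ε ≤ 1 / 32) :
    (3 : ℝ) ^ (q + 1) * (ε / 2 ^ (nu q)) ≤ 1 / 2 := by
  have hq : 2 * q + 2 ≤ nu q + 4 := by
    have h2nu := two_mul_nu q
    rcases Nat.lt_or_ge q 3 with h | h
    · interval_cases q <;> simp [nu]
    · have : q * 4 ≤ q * (q + 1) := Nat.mul_le_mul_left q (by omega)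
      omega
  have hp1 : (3 : ℝ) ^ (q + 1) ≤ (2 : ℝ) ^ (2 * q + 2) := by
    calc (3 : ℝ) ^ (q + 1) ≤ (4 : ℝ) ^ (q + 1) :=
          pow_le_pow_left₀ (by norm_num) (by norm_num) _
      _ = (2 : ℝ) ^ (2 * q + 2) := by
          rw [show (4 : ℝ) = 2 ^ 2 by norm_num, ← pow_mul,
            show 2 * (q + 1) = 2 * q + 2 from by ring]
  have hp2 : (2 : ℝ) ^ (2 * q + 2) ≤ (2 : ℝ) ^ (nu q + 4) :=
    pow_le_pow_right₀ (by norm_num) hq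
  have hpos : (0 : ℝ) < 2 ^ (nu q) := by positivity
  calc (3 : ℝ) ^ (q + 1) * (ε / 2 ^ (nu q))
      ≤ (2 : ℝ) ^ (nu q + 4) * (ε / 2 ^ (nu q)) := by
        apply mul_le_mul_of_nonneg_right (hp1.trans hp2) (by positivity)
    _ = 2 ^ 4 * ε := by rw [pow_add]; field_simp
    _ ≤ 2 ^ 4 * (1 / 32) := by nlinarith
    _ = 1 / 2 := by norm_num

/-! ### the induction step -/

lemma step (q N : ℕ) (ε θ : ℝ) (hN : 4 ≤ N) (hε : 0 < ε) (hε' : ε ≤ 1 / 32)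
    (H : (N : ℝ) ^ q / 32 ≤
      (((box q N).filter
        (fun kh => ε / 2 ^ (nu q) < nrm (θ * apoly q (toR kh)) * (N : ℝ) ^ (q + 1))).card : ℝ)) :
    (N : ℝ) ^ (q + 1) / 32 ≤ (((box (q + 1) N).filter (goodPt (q + 1) ε θ)).card : ℝ) := by
  classical
  have hnum := num1 q hε hε'
  set A := (box q N).filter
    (fun kh => ε / 2 ^ (nu q) < nrm (θ * apoly q (toR kh)) * (N : ℝ) ^ (q + 1)) with hA
  have hline : ∀ kh ∈ A, N ≤ ((Finset.Ico (N : ℤ) ((N : ℤ) + (q + 2) * N)).filter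
      (fun t => goodPt (q + 1) ε θ (Fin.snoc kh t))).card := by
    intro kh hkh
    set x := nrm (θ * apoly q (toR kh)) with hx
    have hx0 : 0 ≤ x := nrm_nonneg _
    have hxN : ε / 2 ^ (nu q) < x * (N : ℝ) ^ (q + 1) := (Finset.mem_filter.mp hkh).2
    have hxh : x ≤ 1 / 2 := nrm_le_half _
    by_cases hsm : x * (N : ℝ) ^ (q + 1) ≤ 1 / 2
    · refine line_count (q + 2) _ N (by omega) N (Or.inl le_rfl) ?_ (N : ℤ)
      intro b hb1 hb2 hb3 t₀
      have hbN : b = N := le_antisymm hb3 hb1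
      have hxN' : ε / 2 ^ (nu q) < x * (b : ℝ) ^ (q + 1) := by rw [hbN]; exact hxN
      have hsm' : x * (b : ℝ) ^ (q + 1) ≤ 1 / 2 := by rw [hbN]; exact hsm
      exact window q N ε θ kh b hxN' hsm' t₀
    · push_neg at hsm
      have hexN : ∃ n : ℕ, 1 ≤ n ∧ ε / 2 ^ (nu q) < x * (n : ℝ) ^ (q + 1) :=
        ⟨N, by omega, hxN⟩
      set b₀ := Nat.find hexN with hb₀def
      obtain ⟨hb₀1, hb₀low⟩ := Nat.find_spec hexN
      have hb₀N : b₀ ≤ N := Nat.find_min' hexN ⟨by omega, hxN⟩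
      refine line_count (q + 2) _ b₀ hb₀1 N (Or.inl hb₀N) ?_ (N : ℤ)
      intro b hb1 hb2 hb3 t₀
      have hpowle : ((b₀ : ℝ)) ^ (q + 1) ≤ (b : ℝ) ^ (q + 1) :=
        pow_le_pow_left₀ (by positivity) (by exact_mod_cast hb1) _
      have hlow' : ε / 2 ^ (nu q) < x * (b : ℝ) ^ (q + 1) :=
        lt_of_lt_of_le hb₀low (by nlinarith)
      have hhigh' : x * (b : ℝ) ^ (q + 1) ≤ 1 / 2 := by
        rcases Nat.eq_or_lt_of_le hb₀1 with h1 | h1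
        · have hb1' : b = 1 := by omega
          rw [hb1']
          norm_num
          linarith
        · have hmin : ¬ (1 ≤ b₀ - 1 ∧ ε / 2 ^ (nu q) < x * ((b₀ - 1 : ℕ) : ℝ) ^ (q + 1)) :=
            Nat.find_min hexN (by omega)
          have hups : x * ((b₀ - 1 : ℕ) : ℝ) ^ (q + 1) ≤ ε / 2 ^ (nu q) := by
            by_contra hc
            push_neg at hc
            exact hmin ⟨by omega, hc⟩
          have hble : (b : ℝ) ≤ 3 * ((b₀ - 1 : ℕ) : ℝ) := by
            have hb2' : b ≤ 3 * (b₀ - 1) := by omega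
            exact_mod_cast hb2'
          calc x * (b : ℝ) ^ (q + 1) ≤ x * (3 * ((b₀ - 1 : ℕ) : ℝ)) ^ (q + 1) := by
                apply mul_le_mul_of_nonneg_left
                  (pow_le_pow_left₀ (by positivity) hble _) hx0
            _ = 3 ^ (q + 1) * (x * ((b₀ - 1 : ℕ) : ℝ) ^ (q + 1)) := by
                rw [mul_pow]; ring
            _ ≤ 3 ^ (q + 1) * (ε / 2 ^ (nu q)) :=
                mul_le_mul_of_nonneg_left hups (by positivity)
            _ ≤ 1 / 2 := hnum
      exact window q N ε θ kh b hlow' hhigh' t₀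
  -- assemble the count via a disjoint union
  set lineF : (Fin q → ℤ) → Finset ℤ := fun kh =>
    (Finset.Ico (N : ℤ) ((N : ℤ) + (q + 2) * N)).filter
      (fun t => goodPt (q + 1) ε θ (Fin.snoc kh t)) with hlineF
  set T := A.biUnion (fun kh => (lineF kh).image (fun t : ℤ => (Fin.snoc kh t : Fin (q + 1) → ℤ))) with hT
  have hsnoc_inj : ∀ kh : Fin q → ℤ, Function.Injective (fun t : ℤ => (Fin.snoc kh t : Fin (q + 1) → ℤ)) := by
    intro kh t₁ t₂ h
    have := congrFun h (Fin.last q)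
    simpa [Fin.snoc_last] using this
  have hTsub : T ⊆ (box (q + 1) N).filter (goodPt (q + 1) ε θ) := by
    intro k hk
    simp only [hT, Finset.mem_biUnion] at hk
    obtain ⟨kh, hkh, hk⟩ := hk
    simp only [Finset.mem_image] at hk
    obtain ⟨t, ht, rfl⟩ := hk
    obtain ⟨htI, htg⟩ := Finset.mem_filter.mp ht
    refine Finset.mem_filter.mpr ⟨?_, htg⟩
    have hkhb : kh ∈ box q N := (Finset.mem_filter.mp hkh).1
    rw [mem_box] at hkhb ⊢
    intro j
    induction j using Fin.lastCases with
    | last =>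
      rw [Fin.snoc_last]
      obtain ⟨ht1, ht2⟩ := Finset.mem_Ico.mp htI
      constructor
      · exact ht1
      · have : ((Fin.last q : Fin (q + 1)) : ℕ) = q := rfl
        rw [this]
        push_cast at ht2 ⊢
        linarith
    | cast i =>
      rw [Fin.snoc_castSucc]
      have : ((Fin.castSucc i : Fin (q + 1)) : ℕ) = (i : ℕ) := rfl
      rw [this]
      exact hkhb i
  have hdisj : ∀ kh₁ ∈ A, ∀ kh₂ ∈ A, kh₁ ≠ kh₂ →
      Disjoint ((lineF kh₁).image (fun t : ℤ => (Fin.snoc kh₁ t : Fin (q + 1) → ℤ)))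
        ((lineF kh₂).image (fun t : ℤ => (Fin.snoc kh₂ t : Fin (q + 1) → ℤ))) := by
    intro kh₁ _ kh₂ _ hne
    rw [Finset.disjoint_left]
    intro k hk1 hk2
    simp only [Finset.mem_image] at hk1 hk2
    obtain ⟨t₁, _, rfl⟩ := hk1
    obtain ⟨t₂, _, heq⟩ := hk2
    apply hne
    funext i
    have := congrFun heq (Fin.castSucc i)
    simpa [Fin.snoc_castSucc] using this.symm
  have hcount : A.card * N ≤ T.card := by
    rw [hT, Finset.card_biUnion hdisj]
    calc A.card * N = ∑ _kh ∈ A, N := by rw [Finset.sum_const, smul_eq_mul]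
      _ ≤ ∑ kh ∈ A, ((lineF kh).image (fun t : ℤ => (Fin.snoc kh t : Fin (q + 1) → ℤ))).card := by
          refine Finset.sum_le_sum fun kh hkh => ?_
          rw [Finset.card_image_of_injective _ (hsnoc_inj kh)]
          exact hline kh hkh
  have hfinal : ((A.card : ℝ)) * N ≤ (((box (q + 1) N).filter (goodPt (q + 1) ε θ)).card : ℝ) := by
    have h1 : T.card ≤ ((box (q + 1) N).filter (goodPt (q + 1) ε θ)).card :=
      Finset.card_le_card hTsub
    have h2 : A.card * N ≤ ((box (q + 1) N).filter (goodPt (q + 1) ε θ)).card :=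
      le_trans hcount h1
    exact_mod_cast h2
  have hN0 : (0 : ℝ) ≤ (N : ℝ) := by positivity
  calc (N : ℝ) ^ (q + 1) / 32 = ((N : ℝ) ^ q / 32) * N := by ring
    _ ≤ ((A.card : ℝ)) * N := mul_le_mul_of_nonneg_right H hN0
    _ ≤ _ := hfinal

/-! ### main induction -/

lemma mainAux : ∀ r : ℕ, ∀ N : ℕ, ∀ ε θ : ℝ, 1 ≤ r → 4 ≤ N → 0 < ε → ε ≤ 1 / 32 →
    ε / (N : ℝ) ^ (nu r) ≤ θ → θ ≤ 1 / 2 →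
    (N : ℝ) ^ r / 32 ≤ (((box r N).filter (goodPt r ε θ)).card : ℝ) := by
  intro r
  induction r with
  | zero => intro N ε θ h1; omega
  | succ q IH =>
    intro N ε θ h1 hN hε hε' hθl hθh
    have hNR : (0:ℝ) < (N:ℝ) := by
      have : (0:ℕ) < N := by omega
      exact_mod_cast this
    have hθ0 : 0 < θ := lt_of_lt_of_le (by positivity) hθl
    rcases Nat.eq_zero_or_pos q with rfl | hq
    · -- base case r = 1
      by_cases hsm : θ * N ≤ ε
      · -- tiny θ : every point of the box is good
        have hnu1 : nu 1 = 1 := by simp [nu]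
        have hall : ∀ k ∈ box 1 N, goodPt 1 ε θ k := by
          intro k hk
          rw [mem_box] at hk
          obtain ⟨hk1, hk2⟩ := hk 0
          have hk2' : (k 0 : ℝ) ≤ 3 * (N : ℝ) := by exact_mod_cast hk2
          have hk1' : (N : ℝ) ≤ (k 0 : ℝ) := by exact_mod_cast hk1
          have hap : apoly 1 (toR k) = ((k 0 : ℤ) : ℝ) := apoly_one (toR k)
          have hθN : ε / (N:ℝ) ≤ θ := by
            have : (N:ℝ) ^ (nu 1) = (N:ℝ) := by rw [hnu1, pow_one]
            rw [← this]; exact hθl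
          have hεθN : ε ≤ θ * N := by
            rw [div_le_iff₀ hNR] at hθN; linarith
          unfold goodPt
          rw [hap, hnu1]
          set v := θ * ((k 0 : ℤ) : ℝ) with hv
          have hv1 : ε ≤ v := by
            calc ε ≤ θ * N := hεθN
              _ ≤ v := by rw [hv]; nlinarith
          have hv2 : v ≤ 3 * ε := by
            calc v ≤ θ * (3 * N) := by rw [hv]; nlinarith
              _ = 3 * (θ * N) := by ring
              _ ≤ 3 * ε := by linarith
          have hfr : Int.fract v = v := Int.fract_eq_self.mpr ⟨by linarith, by linarith⟩
          rw [hfr]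
          constructor
          · have : ε / 2 ^ 1 < ε := by
              rw [pow_one]
              linarith
            linarith
          · have : ε / 2 ^ 1 ≤ ε := by rw [pow_one]; linarith
            linarith
        have hsub : (box 1 N).filter (goodPt 1 ε θ) = box 1 N :=
          Finset.filter_true_of_mem hall
        rw [hsub]
        have hinj : (Finset.Icc (N:ℤ) (3*N)).card ≤ (box 1 N).card := by
          apply Finset.card_le_card_of_injOn (fun t => fun _ : Fin 1 => t)
          · intro t ht
            rw [Finset.mem_coe, mem_box]
            rw [Finset.mem_coe, Finset.mem_Icc] at ht
            intro j
            have hj : (j : ℕ) = 0 := by omega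
            refine ⟨ht.1, ?_⟩
            rw [hj]
            have : ((0:ℕ) + 3) * (N:ℤ) = 3 * N := by ring
            rw [this]
            exact ht.2
          · intro t₁ _ t₂ _ h
            exact congrFun h 0
        have hIcc : (Finset.Icc (N:ℤ) (3*N)).card = 2*N + 1 := by
          rw [Int.card_Icc]
          omega
        have hcard : 2*N + 1 ≤ (box 1 N).card := by omega
        calc (N:ℝ)^1/32 ≤ (N:ℝ) := by
              rw [pow_one]; linarith
          _ ≤ ((2*N + 1 : ℕ) : ℝ) := by push_cast; linarith
          _ ≤ ((box 1 N).card : ℝ) := by exact_mod_cast hcard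
      · -- moderate θ : use the step lemma from level 0
        push_neg at hsm
        have hnu0 : nu 0 = 0 := by simp [nu]
        have H0 : (N:ℝ)^0/32 ≤ (((box 0 N).filter
            (fun kh => ε / 2 ^ (nu 0) < nrm (θ * apoly 0 (toR kh)) * (N:ℝ)^(0+1))).card : ℝ) := by
          have hmem : (default : Fin 0 → ℤ) ∈ box 0 N := by
            rw [mem_box]; intro j; exact j.elim0
          have hnθ : nrm θ = θ := by
            rw [nrm_eq_abs (by rw [abs_of_pos hθ0]; linarith), abs_of_pos hθ0]
          have hgood : ε / 2 ^ (nu 0) < nrm (θ * apoly 0 (toR (default : Fin 0 → ℤ))) * (N:ℝ)^(0+1) := by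
            rw [apoly_zero, mul_one, hnθ, hnu0]
            simpa using hsm
          have hne : ((box 0 N).filter
              (fun kh => ε / 2 ^ (nu 0) < nrm (θ * apoly 0 (toR kh)) * (N:ℝ)^(0+1))).Nonempty :=
            ⟨default, Finset.mem_filter.mpr ⟨hmem, hgood⟩⟩
          have hc1 : 1 ≤ ((box 0 N).filter
              (fun kh => ε / 2 ^ (nu 0) < nrm (θ * apoly 0 (toR kh)) * (N:ℝ)^(0+1))).card :=
            Finset.card_pos.mpr hne
          calc (N:ℝ)^0/32 ≤ 1 := by norm_num
            _ ≤ _ := by exact_mod_cast hc1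
        exact step 0 N ε θ hN hε hε' H0
    · -- inductive step
      set ε' := ε / (N:ℝ)^(q+1) with hε'def
      have hNp : (0:ℝ) < (N:ℝ)^(q+1) := by positivity
      have hNp1 : (1:ℝ) ≤ (N:ℝ)^(q+1) := by
        have h1N : (1:ℝ) ≤ (N:ℝ) := by exact_mod_cast (by omega : 1 ≤ N)
        calc (1:ℝ) = 1 ^ (q+1) := by norm_num
          _ ≤ (N:ℝ) ^ (q+1) := pow_le_pow_left₀ (by norm_num) h1N _
      have hε'0 : 0 < ε' := by positivity
      have hε'32 : ε' ≤ 1/32 := le_trans (by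
        rw [hε'def]
        exact div_le_self hε.le hNp1) hε'
      have hθl' : ε' / (N:ℝ)^(nu q) ≤ θ := by
        have heq : ε' / (N:ℝ)^(nu q) = ε / (N:ℝ)^(nu (q+1)) := by
          rw [hε'def, div_div, ← pow_add]
          congr 2
          rw [nu_succ]
          omega
        rw [heq]
        exact hθl
      have HIH := IH N ε' θ hq hN hε'0 hε'32 hθl' hθh
      have hconv : (box q N).filter (goodPt q ε' θ) ⊆ (box q N).filter
          (fun kh => ε / 2 ^ (nu q) < nrm (θ * apoly q (toR kh)) * (N:ℝ)^(q+1)) := by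
        intro kh hkh
        obtain ⟨hb, hg⟩ := Finset.mem_filter.mp hkh
        refine Finset.mem_filter.mpr ⟨hb, ?_⟩
        have hnrm : ε' / 2 ^ (nu q) < nrm (θ * apoly q (toR kh)) := nrm_fract_iff.mp hg
        calc ε / 2 ^ (nu q) = (ε' / 2 ^ (nu q)) * (N:ℝ)^(q+1) := by
              rw [hε'def]
              field_simp
            _ < nrm (θ * apoly q (toR kh)) * (N:ℝ)^(q+1) :=
              mul_lt_mul_of_pos_right hnrm hNp
      have H : (N:ℝ)^q/32 ≤ (((box q N).filter
          (fun kh => ε / 2 ^ (nu q) < nrm (θ * apoly q (toR kh)) * (N:ℝ)^(q+1))).card : ℝ) :=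
        le_trans HIH (by exact_mod_cast Finset.card_le_card hconv)
      exact step q N ε θ hN hε hε' H

theorem main (r : ℕ) (hr : 1 ≤ r) (N : ℕ) (ε θ : ℝ) (hN : 4 ≤ N) (hε : 0 < ε)
    (hε' : ε ≤ 1 / 32) (hθl : ε / (N : ℝ) ^ (nu r) ≤ θ) (hθh : θ ≤ 1 / 2) :
    (N : ℝ) ^ r / 32 ≤ (((box r N).filter (goodPt r ε θ)).card : ℝ) :=
  mainAux r N ε θ hr hN hε hε' hθl hθh

end Stmt10Aux

/-- Proposition 3.1: for `εN^{-ν_r} ≤ θ ≤ 1/2`, at least `N^r/32` of the lattice points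
`k ∈ Λ_{N,r}` (i.e. `N ≤ k_j ≤ (j+2)N` in 1-indexed `j`) satisfy
`2^{-ν_r}ε < {θ a_r(k)} < 1 - 2^{-ν_r}ε`, where `ν_r = r(r+1)/2`. -/
theorem stmt10 (r : ℕ) (hr : 2 ≤ r) (ε : ℝ) (hε : 0 < ε) (hε' : ε ≤ 1 / 32)
    (N : ℕ) (hN : 4 ≤ N) (θ : ℝ)
    (hθ : ε / (N : ℝ) ^ (r * (r + 1) / 2) ≤ θ) (hθ' : θ ≤ 1 / 2) :
    (N : ℝ) ^ r / 32 ≤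
      ({k : Fin r → ℤ | (∀ j, (N : ℤ) ≤ k j ∧ k j ≤ ((j : ℕ) + 3) * N) ∧
        ε / 2 ^ (r * (r + 1) / 2) < Int.fract (θ * apoly r (fun i => (k i : ℝ))) ∧
        Int.fract (θ * apoly r (fun i => (k i : ℝ)))
          < 1 - ε / 2 ^ (r * (r + 1) / 2)}.ncard : ℝ) := by
  classical
  have hmain := Stmt10Aux.main r (by omega) N ε θ hN hε hε' hθ hθ'
  have hset : {k : Fin r → ℤ | (∀ j, (N : ℤ) ≤ k j ∧ k j ≤ ((j : ℕ) + 3) * N) ∧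
        ε / 2 ^ (r * (r + 1) / 2) < Int.fract (θ * apoly r (fun i => (k i : ℝ))) ∧
        Int.fract (θ * apoly r (fun i => (k i : ℝ)))
          < 1 - ε / 2 ^ (r * (r + 1) / 2)}
      = ↑((Stmt10Aux.box r N).filter (Stmt10Aux.goodPt r ε θ)) := by
    ext k
    simp only [Set.mem_setOf_eq, Finset.coe_filter, Stmt10Aux.mem_box,
      Stmt10Aux.goodPt, Stmt10Aux.toR, Stmt10Aux.nu]
    tauto
  rw [hset, Set.ncard_coe_finset]
  exact hmain
end

section
/- Let q₀ ∈ (0,1) and log(q₀) < x₀ < 0. Then there exists a constant C = C(x₀, q₀) > 0 such that for all real x ≥ x₀ and all q ∈ [0, q₀]: 0 ≤ log((1−q)/(1−e^{−x}q)) + xq/(1−q) ≤ C·x²q/(1−q)². -/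
set_option maxHeartbeats 800000

private lemma exp_sub_one_le_aux (y : ℝ) : Real.exp y - 1 ≤ y * Real.exp y := by
  have h : Real.exp (-y) * Real.exp y = 1 := by rw [← Real.exp_add]; simp
  have h2 := Real.add_one_le_exp (-y)
  nlinarith [Real.exp_pos y]

/-- Lemma 6.1: for `q₀ ∈ (0,1)` and `log q₀ < x₀ < 0`, there is `C = C(x₀,q₀) > 0` with
`0 ≤ log((1-q)/(1-e^{-x}q)) + xq/(1-q) ≤ C x² q/(1-q)²` for all `x ≥ x₀`, `q ∈ [0,q₀]`. -/
theorem stmt12 (q₀ x₀ : ℝ) (hq₀ : q₀ ∈ Set.Ioo (0 : ℝ) 1)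
    (hx₀ : Real.log q₀ < x₀) (hx₀' : x₀ < 0) :
    ∃ C : ℝ, 0 < C ∧ ∀ x : ℝ, x₀ ≤ x → ∀ q : ℝ, q ∈ Set.Icc (0 : ℝ) q₀ →
      0 ≤ Real.log ((1 - q) / (1 - Real.exp (-x) * q)) + x * q / (1 - q) ∧
      Real.log ((1 - q) / (1 - Real.exp (-x) * q)) + x * q / (1 - q)
        ≤ C * x ^ 2 * q / (1 - q) ^ 2 := by
  obtain ⟨hq₀0, hq₀1⟩ := hq₀
  set a := Real.exp (-x₀) with ha
  have ha1 : 1 < a := by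
    rw [ha, show (1:ℝ) = Real.exp 0 from (Real.exp_zero).symm]
    exact Real.exp_lt_exp.mpr (by linarith)
  have hδ : 0 < 1 - a * q₀ := by
    have hq : q₀ < Real.exp x₀ := by
      calc q₀ = Real.exp (Real.log q₀) := (Real.exp_log hq₀0).symm
        _ < Real.exp x₀ := Real.exp_lt_exp.mpr hx₀
    have hax : a * Real.exp x₀ = 1 := by rw [ha, ← Real.exp_add]; simp
    nlinarith [Real.exp_pos (-x₀)]
  refine ⟨2 * a / (1 - a * q₀), by positivity, ?_⟩
  intro x hx q hqm
  obtain ⟨hq0, hqq₀⟩ := hqm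
  set E := Real.exp (-x) with hE
  have hEpos : 0 < E := Real.exp_pos _
  have hEa : E ≤ a := Real.exp_le_exp.mpr (by linarith)
  have hq1 : q < 1 := lt_of_le_of_lt hqq₀ hq₀1
  have h1q : 0 < 1 - q := by linarith
  have hEq : E * q ≤ a * q₀ := by nlinarith
  have hD : 0 < 1 - E * q := by linarith
  -- basic exponential facts
  have hC : 1 - x ≤ E := by
    have := Real.add_one_le_exp (-x); linarith
  have hA : E - 1 + x ≤ a * x ^ 2 := by
    rcases le_or_gt 0 x with hx0 | hx0
    · -- E * exp x = 1, exp x ≥ 1 + x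
      have h1 : E * Real.exp x = 1 := by rw [hE, ← Real.exp_add]; simp
      have h2 := Real.add_one_le_exp x
      have h3 : E * (1 + x) ≤ 1 := by nlinarith
      nlinarith [mul_nonneg hx0 (mul_nonneg hx0 hx0)]
    · have h1 := exp_sub_one_le_aux (-x)
      have h2 : E - 1 ≤ -x * E := by rw [hE]; linarith [h1]
      have h3 : E - 1 ≤ -x * a := by nlinarith
      nlinarith
  have hB : x * (1 - E) ≤ a * x ^ 2 := by
    rcases le_or_gt 0 x with hx0 | hx0
    · nlinarith
    · have h1 := exp_sub_one_le_aux (-x)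
      have h2 : E - 1 ≤ -x * E := by rw [hE]; linarith [h1]
      have h3 : E - 1 ≤ -x * a := by nlinarith
      nlinarith
  constructor
  · -- lower bound
    have h1 := Real.log_le_sub_one_of_pos (div_pos hD h1q)
    rw [Real.log_div hD.ne' h1q.ne'] at h1
    rw [Real.log_div h1q.ne' hD.ne']
    have h2 : 0 ≤ q * (E - 1 + x) := mul_nonneg hq0 (by linarith)
    have heq : 1 - (1 - E * q) / (1 - q) + x * q / (1 - q) = q * (E - 1 + x) / (1 - q) := by
      field_simp; ring
    have h3 : 0 ≤ q * (E - 1 + x) / (1 - q) := div_nonneg h2 h1q.le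
    linarith
  · -- upper bound
    have h4 := Real.log_le_sub_one_of_pos (div_pos h1q hD)
    have t1 : (1 - q) * (E - 1 + x) ≤ a * x ^ 2 := by
      nlinarith [mul_nonneg hq0 (show (0:ℝ) ≤ E - 1 + x by linarith)]
    have t2 : q * (x * (1 - E)) ≤ a * x ^ 2 := by
      have := mul_le_mul_of_nonneg_left hB hq0
      nlinarith [sq_nonneg x]
    have hNum : (E - 1) * (1 - q) + x * (1 - E * q) ≤ 2 * a * x ^ 2 := by
      have hexp : (E - 1) * (1 - q) + x * (1 - E * q)
          = (1 - q) * (E - 1 + x) + q * (x * (1 - E)) := by ring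
      linarith
    set D := (1 - E * q) * (1 - q) with hDdef
    have hDpos : 0 < D := mul_pos hD h1q
    have key : (1 - q) / (1 - E * q) - 1 + x * q / (1 - q)
        = q * ((E - 1) * (1 - q) + x * (1 - E * q)) / D := by
      rw [hDdef, div_sub_one hD.ne', div_add_div _ _ hD.ne' h1q.ne', div_eq_div_iff (mul_ne_zero hD.ne' h1q.ne') (mul_pos hD h1q).ne']; ring
    have step1 : q * ((E - 1) * (1 - q) + x * (1 - E * q)) / D ≤ q * (2 * a * x ^ 2) / D := by
      gcongr
    have hDlb : (1 - a * q₀) * (1 - q) ^ 2 ≤ D := by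
      have hle : 1 - a * q₀ ≤ 1 - E * q := by linarith
      rw [hDdef]
      nlinarith [mul_le_mul_of_nonneg_right hle h1q.le,
        mul_nonneg (mul_nonneg hδ.le h1q.le) hq0]
    have step2 : q * (2 * a * x ^ 2) / D ≤ q * (2 * a * x ^ 2) / ((1 - a * q₀) * (1 - q) ^ 2) := by
      gcongr
    have heq2 : q * (2 * a * x ^ 2) / ((1 - a * q₀) * (1 - q) ^ 2)
        = 2 * a / (1 - a * q₀) * x ^ 2 * q / (1 - q) ^ 2 := by
      field_simp
    linarith
end
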